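/- Let c* > 1 and k₀ ∈ (0,π) be such that f_{c*} ≤ 0 on ℝ and f_{c*}(k₀) = 0 (so k₀ is a double root and a local maximum). Then f_{c*}''(k₀) < 0, i.e. the double root at k₀ is non-degenerate. -/

import Mathlib

open Real

lemma taylor_aux (cs k₀ t : ℝ) (ht : |t| ≤ 1/2) :
    |(-cs^2 * (k₀+t)^2 + 8 - 10 * Real.cos (k₀+t) + 2 * Real.cos (2*(k₀+t)))
      - ((-cs^2 * k₀^2 + 8 - 10 * Real.cos k₀ + 2 * Real.cos (2*k₀))
        + (-2*cs^2*k₀ + 10 * Real.sin k₀ - 4 * Real.sin (2*k₀)) * t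
        + (-2*cs^2 + 10 * Real.cos k₀ - 8 * Real.cos (2*k₀)) * t^2/2
        + (-10 * Real.sin k₀ + 16 * Real.sin (2*k₀)) * t^3/6)| ≤ 5 * t^4 := by
  have ht1 : |t| ≤ 1 := ht.trans (by norm_num)
  have ht2 : |2*t| ≤ 1 := by rw [abs_mul, abs_two]; linarith [abs_nonneg t]
  have h4 : |t|^4 = t^4 := by rw [← abs_pow, abs_of_nonneg (by positivity)]
  have h24 : |2*t|^4 = 16 * t^4 := by
    rw [abs_mul, abs_two, mul_pow, ← abs_pow, abs_of_nonneg (show (0:ℝ) ≤ t^4 by positivity)]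
    norm_num
  have hc := Real.cos_bound ht1
  have hs : |Real.sin t - (t - t^3/6)| ≤ |t|^4 * (5/96) :=
    (Real.sin_bound ht1).trans (by nlinarith [mul_le_mul_of_nonneg_left ht1 (pow_nonneg (abs_nonneg t) 4), pow_nonneg (abs_nonneg t) 4])
  have hc2 := Real.cos_bound ht2
  have hs2 : |Real.sin (2*t) - (2*t - (2*t)^3/6)| ≤ |2*t|^4 * (5/96) :=
    (Real.sin_bound ht2).trans (by nlinarith [mul_le_mul_of_nonneg_left ht2 (pow_nonneg (abs_nonneg (2*t)) 4), pow_nonneg (abs_nonneg (2*t)) 4])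
  rw [h4] at hc hs
  rw [h24] at hc2 hs2
  have hmul : ∀ a e C D : ℝ, |a| ≤ C → |e| ≤ D → |a * e| ≤ C * D := fun a e C D h1 h2 =>
    (abs_mul a e) ▸ mul_le_mul h1 h2 (abs_nonneg e) ((abs_nonneg a).trans h1)
  have e1 : Real.cos (k₀+t) = Real.cos k₀ * Real.cos t - Real.sin k₀ * Real.sin t :=
    Real.cos_add k₀ t
  have e2 : Real.cos (2*(k₀+t)) = Real.cos (2*k₀) * Real.cos (2*t)
      - Real.sin (2*k₀) * Real.sin (2*t) := by
    rw [show 2*(k₀+t) = 2*k₀ + 2*t by ring, Real.cos_add]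
  rw [e1, e2]
  have key : (-cs^2 * (k₀+t)^2 + 8 - 10 * (Real.cos k₀ * Real.cos t - Real.sin k₀ * Real.sin t)
      + 2 * (Real.cos (2*k₀) * Real.cos (2*t) - Real.sin (2*k₀) * Real.sin (2*t)))
      - ((-cs^2 * k₀^2 + 8 - 10 * Real.cos k₀ + 2 * Real.cos (2*k₀))
        + (-2*cs^2*k₀ + 10 * Real.sin k₀ - 4 * Real.sin (2*k₀)) * t
        + (-2*cs^2 + 10 * Real.cos k₀ - 8 * Real.cos (2*k₀)) * t^2/2
        + (-10 * Real.sin k₀ + 16 * Real.sin (2*k₀)) * t^3/6)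
      = (-10 * Real.cos k₀) * (Real.cos t - (1 - t^2/2))
        + (10 * Real.sin k₀) * (Real.sin t - (t - t^3/6))
        + ((2 * Real.cos (2*k₀)) * (Real.cos (2*t) - (1 - (2*t)^2/2))
        + (-2 * Real.sin (2*k₀)) * (Real.sin (2*t) - (2*t - (2*t)^3/6))) := by ring
  rw [key]
  have b1 : |(-10 * Real.cos k₀) * (Real.cos t - (1 - t^2/2))| ≤ 10 * (t^4 * (5/96)) := by
    refine hmul _ _ 10 _ ?_ hc
    rw [abs_mul, show |(-10:ℝ)| = 10 by norm_num]
    linarith [Real.abs_cos_le_one k₀]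
  have b2 : |(10 * Real.sin k₀) * (Real.sin t - (t - t^3/6))| ≤ 10 * (t^4 * (5/96)) := by
    refine hmul _ _ 10 _ ?_ hs
    rw [abs_mul, show |(10:ℝ)| = 10 by norm_num]
    linarith [Real.abs_sin_le_one k₀]
  have b3 : |(2 * Real.cos (2*k₀)) * (Real.cos (2*t) - (1 - (2*t)^2/2))| ≤ 2 * (16 * t^4 * (5/96)) := by
    refine hmul _ _ 2 _ ?_ hc2
    rw [abs_mul, show |(2:ℝ)| = 2 by norm_num]
    linarith [Real.abs_cos_le_one (2*k₀)]
  have b4 : |(-2 * Real.sin (2*k₀)) * (Real.sin (2*t) - (2*t - (2*t)^3/6))| ≤ 2 * (16 * t^4 * (5/96)) := by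
    refine hmul _ _ 2 _ ?_ hs2
    rw [abs_mul, show |(-2:ℝ)| = 2 by norm_num]
    linarith [Real.abs_sin_le_one (2*k₀)]
  have tri := abs_add_le ((-10 * Real.cos k₀) * (Real.cos t - (1 - t^2/2))
        + (10 * Real.sin k₀) * (Real.sin t - (t - t^3/6)))
      ((2 * Real.cos (2*k₀)) * (Real.cos (2*t) - (1 - (2*t)^2/2))
        + (-2 * Real.sin (2*k₀)) * (Real.sin (2*t) - (2*t - (2*t)^3/6)))
  have tri1 := abs_add_le ((-10 * Real.cos k₀) * (Real.cos t - (1 - t^2/2)))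
      ((10 * Real.sin k₀) * (Real.sin t - (t - t^3/6)))
  have tri2 := abs_add_le ((2 * Real.cos (2*k₀)) * (Real.cos (2*t) - (1 - (2*t)^2/2)))
      ((-2 * Real.sin (2*k₀)) * (Real.sin (2*t) - (2*t - (2*t)^3/6)))
  have hnn : (0:ℝ) ≤ t^4 := by positivity
  linarith [tri, tri1, tri2, b1, b2, b3, b4]

set_option maxHeartbeats 1000000

open Real in
theorem stmt_7 (cs k₀ : ℝ) (hcs : 1 < cs) (hk₀ : k₀ ∈ Set.Ioo 0 π)
    (hle : ∀ k : ℝ, -cs^2 * k^2 + 8 - 10 * Real.cos k + 2 * Real.cos (2*k) ≤ 0)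
    (hroot : -cs^2 * k₀^2 + 8 - 10 * Real.cos k₀ + 2 * Real.cos (2*k₀) = 0) :
    iteratedDeriv 2 (fun k => -cs^2 * k^2 + 8 - 10 * Real.cos k + 2 * Real.cos (2*k)) k₀ < 0 := by
  set F : ℝ → ℝ := fun k => -cs^2 * k^2 + 8 - 10 * Real.cos k + 2 * Real.cos (2*k) with hF
  -- derivative of F at any point
  have hder : ∀ x : ℝ, HasDerivAt F (-2*cs^2*x + 10 * Real.sin x - 4 * Real.sin (2*x)) x := by
    intro x
    have h1 : HasDerivAt (fun k : ℝ => -cs^2 * k^2) (-cs^2 * (2*x)) x := by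
      have := (hasDerivAt_pow 2 x).const_mul (-cs^2)
      simp only [Nat.cast_ofNat, pow_one] at this
      convert this using 1
      exacts [rfl, rfl, by norm_num]
    have h2 : HasDerivAt (fun k : ℝ => Real.cos k) (-Real.sin x) x := Real.hasDerivAt_cos x
    have hg : HasDerivAt (fun y : ℝ => 2 * y) 2 x := by
      have := (hasDerivAt_id x).const_mul (2:ℝ)
      simpa using this
    have h3 : HasDerivAt (fun k : ℝ => Real.cos (2*k)) (-Real.sin (2*x) * 2) x :=
      (Real.hasDerivAt_cos (2*x)).comp x hg
    have hsum := ((h1.add_const 8).sub (h2.const_mul 10)).add (h3.const_mul 2)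
    have heq : -2*cs^2*x + 10 * Real.sin x - 4 * Real.sin (2*x)
        = -cs^2 * (2*x) - 10 * -Real.sin x + 2 * (-Real.sin (2*x) * 2) := by ring
    rw [heq]
    exact hsum
  have hderiv : deriv F = fun x => -2*cs^2*x + 10 * Real.sin x - 4 * Real.sin (2*x) :=
    funext fun x => (hder x).deriv
  -- second derivative at k₀
  have hd2 : ∀ x : ℝ, HasDerivAt (deriv F) (-2*cs^2 + 10 * Real.cos x - 8 * Real.cos (2*x)) x := by
    intro x
    rw [hderiv]
    have h1 : HasDerivAt (fun k : ℝ => -2*cs^2*k) (-2*cs^2) x := by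
      have := (hasDerivAt_id x).const_mul (-2*cs^2)
      simpa using this
    have h2 : HasDerivAt (fun k : ℝ => Real.sin k) (Real.cos x) x := Real.hasDerivAt_sin x
    have hg : HasDerivAt (fun y : ℝ => 2 * y) 2 x := by
      have := (hasDerivAt_id x).const_mul (2:ℝ)
      simpa using this
    have h3 : HasDerivAt (fun k : ℝ => Real.sin (2*k)) (Real.cos (2*x) * 2) x :=
      (Real.hasDerivAt_sin (2*x)).comp x hg
    have hsum := (h1.add (h2.const_mul 10)).sub (h3.const_mul 4)
    have heq : -2*cs^2 + 10 * Real.cos x - 8 * Real.cos (2*x)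
        = -2*cs^2 + 10 * Real.cos x - 4 * (Real.cos (2*x) * 2) := by ring
    rw [heq]
    exact hsum
  have hiter : iteratedDeriv 2 F k₀ = -2*cs^2 + 10 * Real.cos k₀ - 8 * Real.cos (2*k₀) := by
    rw [show (2:ℕ) = 1 + 1 from rfl, iteratedDeriv_succ, iteratedDeriv_one]
    exact (hd2 k₀).deriv
  rw [hiter]
  -- first derivative vanishes
  have hmax : IsLocalMax F k₀ := Filter.Eventually.of_forall fun k => by
    show F k ≤ F k₀; rw [hF]; simp only []; rw [hroot]; exact hle k
  have hP : -2*cs^2*k₀ + 10 * Real.sin k₀ - 4 * Real.sin (2*k₀) = 0 := by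
    have := hmax.deriv_eq_zero
    rwa [hderiv] at this
  set Q : ℝ := -2*cs^2 + 10 * Real.cos k₀ - 8 * Real.cos (2*k₀) with hQdef
  set R : ℝ := -10 * Real.sin k₀ + 16 * Real.sin (2*k₀) with hRdef
  -- key inequality from Taylor: for |t| ≤ 1/2, Q*t^2/2 + R*t^3/6 ≤ 5*t^4
  have hkey : ∀ t : ℝ, |t| ≤ 1/2 → Q * t^2/2 + R * t^3/6 ≤ 5 * t^4 := by
    intro t ht
    have htay := taylor_aux cs k₀ t ht
    have hFle : F (k₀ + t) ≤ 0 := hle (k₀ + t)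
    have h := (abs_le.mp htay).1
    have hFval : F (k₀ + t) = -cs^2 * (k₀+t)^2 + 8 - 10 * Real.cos (k₀+t)
        + 2 * Real.cos (2*(k₀+t)) := rfl
    rw [← hFval, hroot, hP] at h
    linarith
  -- Q ≤ 0
  have hQle : Q ≤ 0 := by
    by_contra hq
    push_neg at hq
    set t : ℝ := min (1/2) (Real.sqrt (Q/20)) with htd
    have hsq : 0 < Real.sqrt (Q/20) := Real.sqrt_pos.mpr (by linarith)
    have htpos : 0 < t := lt_min (by norm_num) hsq
    have ht2 : t^2 ≤ Q/20 := by
      calc t^2 ≤ (Real.sqrt (Q/20))^2 := by gcongr; exact min_le_right _ _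
        _ = Q/20 := Real.sq_sqrt (by linarith)
    have hta : |t| ≤ 1/2 := by
      rw [abs_of_pos htpos]; exact min_le_left _ _
    have h1 := hkey t hta
    have h2 := hkey (-t) (by rwa [abs_neg])
    have : Q * t^2 ≤ 10 * t^4 := by nlinarith [h1, h2]
    nlinarith [pow_pos htpos 2, pow_pos htpos 4, sq_nonneg (t^2)]
  by_contra hcon
  push_neg at hcon
  have hQ0 : Q = 0 := le_antisymm hQle hcon
  -- R = 0
  have hR0 : R = 0 := by
    by_contra hr
    set t : ℝ := min (1/2) (|R|/60) with htd
    have htpos : 0 < t := lt_min (by norm_num) (by positivity)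
    have hta : |t| ≤ 1/2 := by rw [abs_of_pos htpos]; exact min_le_left _ _
    have ht60 : t ≤ |R|/60 := min_le_right _ _
    have h1 := hkey t hta
    have h2 := hkey (-t) (by rwa [abs_neg])
    rw [hQ0] at h1 h2
    -- |R| * t^3 / 6 ≤ 5 t^4, so |R| ≤ 30 t ≤ |R|/2
    have habs : |R| * t^3 / 6 ≤ 5 * t^4 := by
      rcases abs_cases R with ⟨he, _⟩ | ⟨he, _⟩
      · rw [he]; nlinarith [h1]
      · rw [he]; nlinarith [h2, pow_pos htpos 3, pow_pos htpos 4]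
    have hRle : |R| ≤ 30 * t := by
      have h3 := pow_pos htpos 3
      nlinarith [habs]
    have : |R| ≤ |R|/2 := by
      calc |R| ≤ 30 * t := hRle
        _ ≤ 30 * (|R|/60) := by gcongr
        _ = |R|/2 := by ring
    have : 0 < |R| := abs_pos.mpr hr
    linarith
  -- extract cos k₀ = 5/16
  have hs : 0 < Real.sin k₀ := Real.sin_pos_of_pos_of_lt_pi hk₀.1 hk₀.2
  have hsin2 : Real.sin (2*k₀) = 2 * Real.sin k₀ * Real.cos k₀ := Real.sin_two_mul k₀
  have hcos2 : Real.cos (2*k₀) = 2 * Real.cos k₀^2 - 1 := Real.cos_two_mul k₀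
  have hA : Real.cos k₀ = 5/16 := by
    rw [hRdef, hsin2] at hR0
    have : Real.sin k₀ * (32 * Real.cos k₀ - 10) = 0 := by linarith [hR0]
    rcases mul_eq_zero.mp this with h | h
    · linarith
    · linarith
  have hc2 : cs^2 = 153/32 := by
    rw [hQdef, hcos2, hA] at hQ0
    norm_num at hQ0
    linarith
  have hk2 : k₀^2 = 209/306 := by
    rw [hcos2, hA, hc2] at hroot
    norm_num at hroot
    linarith
  have hk1 : k₀ < 1 := by nlinarith [hk₀.1]
  -- but cos k₀ = 5/16 < cos 1 forces k₀ > 1, contradiction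
  have hcos1 : (43:ℝ)/96 ≤ Real.cos 1 := by
    have := Real.cos_bound (x := 1) (by norm_num)
    have h := (abs_le.mp this).1
    norm_num at h ⊢
    linarith
  have : Real.cos 1 < Real.cos k₀ :=
    Real.cos_lt_cos_of_nonneg_of_le_pi (le_of_lt hk₀.1)
      (by linarith [Real.pi_gt_three]) hk1
  rw [hA] at this
  linarith
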